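/- Let X be a linear subspace of the bounded functions on [0,1] (with sup norm) such that inf_{f∈X} μ(C(f)) = 0, where μ is Lebesgue measure. Then {f ∈ X : μ(C(f)) = 0} is a residual G_δ subset of X. -/

import Mathlib

open Set MeasureTheory Filter Topology
open scoped ENNReal NNReal
set_option maxHeartbeats 1000000
set_option synthInstance.maxHeartbeats 200000

namespace Stmt9Aux

abbrev I01 := Set.Icc (0:ℝ) 1
noncomputable abbrev B := lp (fun _ : I01 => ℝ) ⊤

noncomputable def m (f : B) : ℝ≥0∞ := volume {x : I01 | ContinuousAt (⇑f) x}

/-- points near which f has oscillation at most r -/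
def Es (f : I01 → ℝ) (r : ℝ) : Set I01 :=
  {x | ∃ u ∈ nhds x, ∀ y ∈ u, ∀ z ∈ u, |f y - f z| ≤ r}

lemma isOpen_Es (f : I01 → ℝ) (r : ℝ) : IsOpen (Es f r) := by
  rw [isOpen_iff_mem_nhds]
  rintro x ⟨u, hu, hprop⟩
  refine mem_of_superset (interior_mem_nhds.mpr hu) ?_
  intro y hy
  exact ⟨interior u, (isOpen_interior).mem_nhds hy,
    fun a ha b hb => hprop a (interior_subset ha) b (interior_subset hb)⟩

lemma Es_mono (f : I01 → ℝ) {r r' : ℝ} (h : r ≤ r') : Es f r ⊆ Es f r' := by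
  rintro x ⟨u, hu, hp⟩
  exact ⟨u, hu, fun y hy z hz => (hp y hy z hz).trans h⟩

lemma cont_subset_Es (f : I01 → ℝ) {r : ℝ} (hr : 0 < r) :
    {x | ContinuousAt f x} ⊆ Es f r := by
  intro x hx
  have h2 : 0 < r / 2 := by linarith
  have : {y | |f y - f x| ≤ r/2} ∈ nhds x := by
    have := hx (Metric.closedBall_mem_nhds (f x) h2)
    refine mem_of_superset this ?_
    intro y hy
    simpa [Metric.mem_closedBall, Real.dist_eq] using hy
  refine ⟨_, this, fun y hy z hz => ?_⟩
  have := abs_sub (f y) (f z)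
  calc |f y - f z| = |(f y - f x) - (f z - f x)| := by ring_nf
    _ ≤ |f y - f x| + |f z - f x| := abs_sub _ _
    _ ≤ r/2 + r/2 := add_le_add hy hz
    _ = r := by ring

lemma iInter_Es_subset (f : I01 → ℝ) :
    (⋂ n : ℕ, Es f (((n:ℝ)+1)⁻¹)) ⊆ {x | ContinuousAt f x} := by
  intro x hx
  rw [mem_setOf_eq, Metric.continuousAt_iff]
  intro ε hε
  obtain ⟨n, hn⟩ := exists_nat_one_div_lt hε
  have hxn := mem_iInter.mp hx n
  obtain ⟨u, hu, hp⟩ := hxn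
  obtain ⟨δ, hδ, hball⟩ := Metric.mem_nhds_iff.mp hu
  refine ⟨δ, hδ, fun {y} hy => ?_⟩
  have hyx : y ∈ u := hball hy
  have hxx : x ∈ u := hball (Metric.mem_ball_self hδ)
  have := hp y hyx x hxx
  rw [Real.dist_eq]
  calc |f y - f x| ≤ ((n:ℝ)+1)⁻¹ := this
    _ = 1 / (n + 1) := by rw [one_div]
    _ < ε := hn

lemma Es_perturb {f g : I01 → ℝ} {δ r : ℝ} (h : ∀ x, |f x - g x| ≤ δ) :
    Es g r ⊆ Es f (r + 2*δ) := by
  rintro x ⟨u, hu, hp⟩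
  refine ⟨u, hu, fun y hy z hz => ?_⟩
  calc |f y - f z| = |(f y - g y) + (g y - g z) + (g z - f z)| := by ring_nf
    _ ≤ |(f y - g y) + (g y - g z)| + |g z - f z| := abs_add_le _ _
    _ ≤ |f y - g y| + |g y - g z| + |g z - f z| := by
        exact add_le_add (abs_add_le _ _) le_rfl
    _ ≤ δ + r + δ := by
        refine add_le_add (add_le_add (h y) (hp y hy z hz)) ?_
        rw [abs_sub_comm]; exact h z
    _ = r + 2*δ := by ring

lemma sup_bound (f g : B) (x : I01) : |(⇑f) x - (⇑g) x| ≤ ‖f - g‖ := by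
  have h1 := lp.norm_apply_le_norm ENNReal.top_ne_zero (f - g) x
  have h2 : (⇑(f - g)) x = (⇑f) x - (⇑g) x := by rw [lp.coeFn_sub]; rfl
  rw [h2, Real.norm_eq_abs] at h1
  exact h1

lemma volume_ne_top (s : Set I01) : volume s ≠ ⊤ :=
  (measure_lt_top volume s).ne

/-- upper semicontinuity of m -/
lemma usc (f : B) (c : ℝ≥0∞) (h : m f < c) :
    ∃ δ > (0:ℝ), ∀ g : B, ‖g - f‖ < δ → m g < c := by
  have hmono : Antitone (fun n : ℕ => Es (⇑f) (((n:ℝ)+1)⁻¹)) := by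
    intro a b hab
    refine Es_mono _ ?_
    have : (a:ℝ) + 1 ≤ (b:ℝ) + 1 := by exact_mod_cast by omega
    exact inv_anti₀ (by positivity) this
  have hinter : (⋂ n : ℕ, Es (⇑f) (((n:ℝ)+1)⁻¹)) = {x | ContinuousAt (⇑f) x} := by
    refine subset_antisymm (iInter_Es_subset _) ?_
    exact subset_iInter fun n => cont_subset_Es _ (by positivity)
  have htend : Tendsto (fun n : ℕ => volume (Es (⇑f) (((n:ℝ)+1)⁻¹))) atTop
      (nhds (m f)) := by
    have := tendsto_measure_iInter_atTop
      (μ := (volume : Measure I01)) (s := fun n : ℕ => Es (⇑f) (((n:ℝ)+1)⁻¹))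
      (fun n => ((isOpen_Es _ _).measurableSet).nullMeasurableSet) hmono
      ⟨0, volume_ne_top _⟩
    rwa [hinter] at this
  have hev : ∀ᶠ n : ℕ in atTop, volume (Es (⇑f) (((n:ℝ)+1)⁻¹)) < c :=
    htend.eventually_lt_const h
  obtain ⟨n, hn⟩ := hev.exists
  refine ⟨((n:ℝ)+1)⁻¹/3, by positivity, fun g hg => ?_⟩
  have hsub : {x : I01 | ContinuousAt (⇑g) x} ⊆ Es (⇑f) (((n:ℝ)+1)⁻¹) := by
    have h1 : {x : I01 | ContinuousAt (⇑g) x} ⊆ Es (⇑g) (((n:ℝ)+1)⁻¹/3) :=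
      cont_subset_Es _ (by positivity)
    have h2 : Es (⇑g) (((n:ℝ)+1)⁻¹/3) ⊆ Es (⇑f) (((n:ℝ)+1)⁻¹/3 + 2*‖f - g‖) :=
      Es_perturb (fun x => sup_bound f g x)
    have h3 : Es (⇑f) (((n:ℝ)+1)⁻¹/3 + 2*‖f - g‖) ⊆ Es (⇑f) (((n:ℝ)+1)⁻¹) := by
      refine Es_mono _ ?_
      have : ‖f - g‖ < ((n:ℝ)+1)⁻¹/3 := by rwa [norm_sub_rev] at hg
      linarith
    exact (h1.trans h2).trans h3
  exact lt_of_le_of_lt (measure_mono hsub) hn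

end Stmt9Aux

open Stmt9Aux

theorem stmt_9 (X : Submodule ℝ (lp (fun _ : Set.Icc (0:ℝ) 1 => ℝ) ⊤))
    (hX : ⨅ f : X,
      volume {x : Set.Icc (0:ℝ) 1 | ContinuousAt (⇑(f : lp (fun _ : Set.Icc (0:ℝ) 1 => ℝ) ⊤)) x} = 0) :
    IsGδ {f : X |
      volume {x : Set.Icc (0:ℝ) 1 | ContinuousAt (⇑(f : lp (fun _ : Set.Icc (0:ℝ) 1 => ℝ) ⊤)) x} = 0} ∧
    IsMeagre {f : X |
      volume {x : Set.Icc (0:ℝ) 1 | ContinuousAt (⇑(f : lp (fun _ : Set.Icc (0:ℝ) 1 => ℝ) ⊤)) x} = 0}ᶜ := by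
  classical
  set S : Set X := {f : X | m (f : B) = 0} with hS
  -- the open sets
  set U : ℕ → Set X := fun n => {f : X | m (f : B) < ((n:ℝ≥0∞)+1)⁻¹} with hU
  have hUopen : ∀ n, IsOpen (U n) := by
    intro n
    rw [Metric.isOpen_iff]
    intro f hf
    obtain ⟨δ, hδ, hball⟩ := usc (f : B) _ hf
    refine ⟨δ, hδ, fun g hg => ?_⟩
    have : ‖(g:B) - (f:B)‖ < δ := by
      rw [Metric.mem_ball, dist_eq_norm] at hg
      exact_mod_cast hg
    exact hball _ this
  have hUdense : ∀ n, Dense (U n) := by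
    intro n
    rw [Metric.dense_iff]
    intro f r hr
    by_cases hf : m (f : B) < ((n:ℝ≥0∞)+1)⁻¹
    · exact ⟨f, Metric.mem_ball_self hr, hf⟩
    push_neg at hf
    -- pick h with small continuity set
    have hlt : ⨅ g : X, m (g : B) < ((n:ℝ≥0∞)+1)⁻¹ := by
      unfold m
      rw [hX]
      simp
    obtain ⟨h, hh⟩ := iInf_lt_iff.mp hlt
    -- h ≠ 0
    have hhne : (h : B) ≠ 0 := by
      intro h0
      have : {x : I01 | ContinuousAt (⇑(h:B)) x} = univ := by
        rw [h0]
        refine eq_univ_of_forall fun x => ?_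
        have : ⇑(0 : B) = (0 : I01 → ℝ) := lp.coeFn_zero _ _
        rw [mem_setOf_eq, this]
        exact continuous_zero.continuousAt
      have h1 : m (f : B) ≤ m (h : B) := by
        unfold m; rw [this]; exact measure_mono (subset_univ _)
      exact absurd (lt_of_le_of_lt (hf.trans h1) hh) (lt_irrefl _)
    have hhnorm : 0 < ‖(h : B)‖ := norm_pos_iff.mpr hhne
    -- disjoint family indexed by t : ℝ
    set D : ℝ → Set I01 := fun t =>
      {x | ContinuousAt (⇑((f:B) + t • (h:B))) x} \ {x | ContinuousAt (⇑(h:B)) x} with hD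
    have hDm : ∀ t, MeasurableSet (D t) :=
      fun t => ((IsGδ.setOf_continuousAt _).measurableSet).diff
        (IsGδ.setOf_continuousAt _).measurableSet
    have hDdisj : Pairwise (Function.onFun Disjoint D) := by
      intro t t' htt'
      rw [Function.onFun, Set.disjoint_left]
      rintro x ⟨hx1, hx2⟩ ⟨hx1', _⟩
      apply hx2
      have e1 : ⇑((f:B) + t • (h:B)) = ⇑(f:B) + t • ⇑(h:B) := by
        rw [lp.coeFn_add, lp.coeFn_smul]
      have e2 : ⇑((f:B) + t' • (h:B)) = ⇑(f:B) + t' • ⇑(h:B) := by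
        rw [lp.coeFn_add, lp.coeFn_smul]
      rw [e1] at hx1; rw [e2] at hx1'
      have hsub : ContinuousAt (fun y => (t - t') • (⇑(h:B)) y) x := by
        have h5 : ContinuousAt (fun y => (⇑(f:B) + t • ⇑(h:B)) y - (⇑(f:B) + t' • ⇑(h:B)) y) x :=
          ContinuousAt.sub hx1 hx1'
        have e3 : (fun y => (⇑(f:B) + t • ⇑(h:B)) y - (⇑(f:B) + t' • ⇑(h:B)) y)
            = fun y => (t - t') • (⇑(h:B)) y := by
          funext y
          simp only [Pi.add_apply, Pi.smul_apply, smul_eq_mul, sub_smul]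
          ring
        rwa [e3] at h5
      have : ContinuousAt (fun y => (t - t')⁻¹ • ((t - t') • (⇑(h:B)) y)) x :=
        hsub.const_smul (t - t')⁻¹
      have e4 : (fun y => (t - t')⁻¹ • ((t - t') • (⇑(h:B)) y)) = ⇑(h:B) := by
        funext y
        rw [smul_smul, inv_mul_cancel₀ (sub_ne_zero.mpr htt'), one_smul]
      rwa [e4] at this
    have hcount : Set.Countable {t : ℝ | 0 < volume (D t)} :=
      Measure.countable_meas_pos_of_disjoint_iUnion hDm hDdisj
    -- find good t
    set t0 : ℝ := min (r / ‖(h:B)‖) 1 with ht0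
    have ht0pos : 0 < t0 := lt_min (div_pos hr hhnorm) one_pos
    have : ¬ (Ioo (0:ℝ) t0 ⊆ {t : ℝ | 0 < volume (D t)}) := by
      intro hsub
      have : (Ioo (0:ℝ) t0).Countable := hcount.mono hsub
      have hmk := Cardinal.mk_Ioo_real ht0pos
      rw [← Set.countable_coe_iff, ← Cardinal.mk_le_aleph0_iff, hmk] at this
      exact absurd this (not_le.mpr Cardinal.aleph0_lt_continuum)
    obtain ⟨t, htIoo, htD⟩ := not_subset.mp this
    have htD0 : volume (D t) = 0 := by
      by_contra h0
      exact htD (pos_iff_ne_zero.mpr h0)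
    -- the perturbed element
    refine ⟨f + t • h, ?_, ?_⟩
    · rw [Metric.mem_ball, dist_eq_norm]
      have e5 : (f + t • h : X) - f = t • h := by abel
      rw [e5]
      have e6 : ‖(t • h : X)‖ = ‖t • (h : B)‖ := by
        rfl
      rw [e6, norm_smul, Real.norm_eq_abs, abs_of_pos htIoo.1]
      calc t * ‖(h:B)‖ < t0 * ‖(h:B)‖ := by
            exact mul_lt_mul_of_pos_right htIoo.2 hhnorm
        _ ≤ (r / ‖(h:B)‖) * ‖(h:B)‖ := by
            exact mul_le_mul_of_nonneg_right (min_le_left _ _) (le_of_lt hhnorm)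
        _ = r := div_mul_cancel₀ _ (ne_of_gt hhnorm)
    · show m (((f + t • h : X) : B)) < _
      have hcoe : ((f + t • h : X) : B) = (f : B) + t • (h : B) := by
        rw [Submodule.coe_add, Submodule.coe_smul]
      rw [hcoe]
      have hsub : {x : I01 | ContinuousAt (⇑((f:B) + t • (h:B))) x}
          ⊆ D t ∪ {x | ContinuousAt (⇑(h:B)) x} := by
        intro x hx
        by_cases hc : ContinuousAt (⇑(h:B)) x
        · exact Or.inr hc
        · exact Or.inl ⟨hx, hc⟩
      calc m ((f:B) + t • (h:B)) ≤ volume (D t ∪ {x | ContinuousAt (⇑(h:B)) x}) :=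
            measure_mono hsub
        _ ≤ volume (D t) + volume {x | ContinuousAt (⇑(h:B)) x} := measure_union_le _ _
        _ = m (h : B) := by rw [htD0, zero_add]; rfl
        _ < _ := hh
  -- S as countable intersection
  have hSeq : S = ⋂ n, U n := by
    ext f
    simp only [hS, hU, mem_setOf_eq, mem_iInter]
    constructor
    · intro h0 n; rw [h0]; simp
    · intro hall
      by_contra hne
      obtain ⟨k, hk⟩ := ENNReal.exists_inv_nat_lt hne
      have := hall k
      have hle : ((k:ℝ≥0∞)+1)⁻¹ ≤ ((k:ℝ≥0∞))⁻¹ :=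
        ENNReal.inv_le_inv.mpr (le_add_of_nonneg_right zero_le_one)
      exact absurd (this.trans_le hle) (not_lt.mpr hk.le)
  constructor
  · rw [show {f : X | volume {x : I01 | ContinuousAt (⇑(f : B)) x} = 0} = S from rfl, hSeq]
    exact IsGδ.iInter fun n => (hUopen n).isGδ
  · rw [show {f : X | volume {x : I01 | ContinuousAt (⇑(f : B)) x} = 0} = S from rfl]
    rw [IsMeagre, compl_compl, hSeq]
    exact countable_iInter_mem.mpr fun n => residual_of_dense_open (hUopen n) (hUdense n)
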